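/- For all real numbers a, b, c, the inequality |a−b|/(√(a²+1)·√(b²+1)) ≤ |a−c|/(√(a²+1)·√(c²+1)) + |c−b|/(√(c²+1)·√(b²+1)) holds (triangle inequality for the algebraic distance kernel). -/

import Mathlib

lemma algDist_key (a b c : ℝ) :
    |a - b| * Real.sqrt (c ^ 2 + 1) ≤
      |a - c| * Real.sqrt (b ^ 2 + 1) + |c - b| * Real.sqrt (a ^ 2 + 1) := by
  have hA : 0 < Real.sqrt (a ^ 2 + 1) := Real.sqrt_pos.2 (by positivity)
  have hB : 0 < Real.sqrt (b ^ 2 + 1) := Real.sqrt_pos.2 (by positivity)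
  have hC : 0 < Real.sqrt (c ^ 2 + 1) := Real.sqrt_pos.2 (by positivity)
  have h1 : |1 + b * c| ≤ Real.sqrt (b ^ 2 + 1) * Real.sqrt (c ^ 2 + 1) := by
    rw [← Real.sqrt_sq_eq_abs, ← Real.sqrt_mul (by positivity)]
    exact Real.sqrt_le_sqrt (by nlinarith [sq_nonneg (b - c)])
  have h2 : |1 + a * c| ≤ Real.sqrt (a ^ 2 + 1) * Real.sqrt (c ^ 2 + 1) := by
    rw [← Real.sqrt_sq_eq_abs, ← Real.sqrt_mul (by positivity)]
    exact Real.sqrt_le_sqrt (by nlinarith [sq_nonneg (a - c)])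
  have hid : |a - b| * (c ^ 2 + 1) ≤
      |a - c| * |1 + b * c| + |c - b| * |1 + a * c| := by
    calc |a - b| * (c ^ 2 + 1) = |(a - c) * (1 + b * c) + (c - b) * (1 + a * c)| := by
          rw [show (a - c) * (1 + b * c) + (c - b) * (1 + a * c)
              = (a - b) * (c ^ 2 + 1) by ring, abs_mul,
            abs_of_nonneg (show (0:ℝ) ≤ c ^ 2 + 1 by positivity)]
      _ ≤ |(a - c) * (1 + b * c)| + |(c - b) * (1 + a * c)| := abs_add_le _ _
      _ = |a - c| * |1 + b * c| + |c - b| * |1 + a * c| := by rw [abs_mul, abs_mul]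
  have hsq : Real.sqrt (c ^ 2 + 1) * Real.sqrt (c ^ 2 + 1) = c ^ 2 + 1 :=
    Real.mul_self_sqrt (by positivity)
  rw [← mul_le_mul_iff_of_pos_right hC]
  calc |a - b| * Real.sqrt (c ^ 2 + 1) * Real.sqrt (c ^ 2 + 1)
      = |a - b| * (c ^ 2 + 1) := by rw [mul_assoc, hsq]
    _ ≤ |a - c| * |1 + b * c| + |c - b| * |1 + a * c| := hid
    _ ≤ |a - c| * (Real.sqrt (b ^ 2 + 1) * Real.sqrt (c ^ 2 + 1)) +
        |c - b| * (Real.sqrt (a ^ 2 + 1) * Real.sqrt (c ^ 2 + 1)) := by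
        gcongr
    _ = (|a - c| * Real.sqrt (b ^ 2 + 1) + |c - b| * Real.sqrt (a ^ 2 + 1)) *
        Real.sqrt (c ^ 2 + 1) := by ring

/-- Triangle inequality for the core of the algebraic distance. -/
theorem algDist_triangle (a b c : ℝ) :
    |a - b| / (Real.sqrt (a ^ 2 + 1) * Real.sqrt (b ^ 2 + 1)) ≤
      |a - c| / (Real.sqrt (a ^ 2 + 1) * Real.sqrt (c ^ 2 + 1)) +
        |c - b| / (Real.sqrt (c ^ 2 + 1) * Real.sqrt (b ^ 2 + 1)) := by
  have hA : 0 < Real.sqrt (a ^ 2 + 1) := Real.sqrt_pos.2 (by positivity)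
  have hB : 0 < Real.sqrt (b ^ 2 + 1) := Real.sqrt_pos.2 (by positivity)
  have hC : 0 < Real.sqrt (c ^ 2 + 1) := Real.sqrt_pos.2 (by positivity)
  rw [div_add_div _ _ (by positivity) (by positivity), div_le_div_iff₀ (by positivity) (by positivity)]
  nlinarith [algDist_key a b c, mul_pos hA (mul_pos hB hC), abs_nonneg (a - b),
    mul_le_mul_of_nonneg_right (algDist_key a b c) (le_of_lt (mul_pos hA (mul_pos hB hC)))]
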